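/- arXiv:2108.13932 — 7 statements merged into one kernel-verified Lean document; each statement's English description precedes it below -/
import Mathlib

section
/- The entanglement kernel is an order ideal of A_R: if k ∈ K_ω satisfies 0 ≤ k, and a ∈ A_R satisfies 0 ≤ a and a ≤ k, then a ∈ K_ω. -/
open ComplexOrder

/-- A state on a unital C*-algebra: a `ℂ`-linear functional `ω` with `ω 1 = 1` such that
`ω (star a * a)` is a nonnegative real number for every `a`. -/
def IsState {C : Type*} [NormedRing C] [StarRing C] [NormedAlgebra ℂ C]
    (ω : C →ₗ[ℂ] ℂ) : Prop :=
  ω 1 = 1 ∧ ∀ a : C, 0 ≤ ω (star a * a)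

/-- The entanglement kernel of a state `ω`:
`K_ω = {a ∈ A_R : ω (x * a) = 0 for all x ∈ A_L}`. -/
def entKer {C : Type*} [NormedRing C] [StarRing C] [NormedAlgebra ℂ C]
    [StarModule ℂ C] (AL AR : StarSubalgebra ℂ C) (ω : C →ₗ[ℂ] ℂ) : Set C :=
  {a : C | a ∈ AR ∧ ∀ x ∈ AL, ω (x * a) = 0}

/-- Degenerate Cauchy–Schwarz: if `ω (star c * c) = 0` then `ω (star b * c) = 0`. -/
lemma cs_degenerate {C : Type*} [NormedRing C] [StarRing C] [NormedAlgebra ℂ C] [StarModule ℂ C]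
    (ω : C →ₗ[ℂ] ℂ) (hpos : ∀ a : C, 0 ≤ ω (star a * a))
    (b c : C) (hc : ω (star c * c) = 0) : ω (star b * c) = 0 := by
  set z := ω (star b * c) with hz
  set w := ω (star c * b) with hw
  set B := ω (star b * b) with hB
  have key : ∀ t : ℂ, 0 ≤ B + t * z + (starRingEnd ℂ) t * w := by
    simp only [starRingEnd_apply]
    intro t
    have h := hpos (b + t • c)
    have expand : star (b + t • c) * (b + t • c)
        = star b * b + t • (star b * c) + star t • (star c * b)
          + (t * star t) • (star c * c) := by
      simp only [star_add, star_smul, add_mul, mul_add, smul_mul_assoc, mul_smul_comm,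
        smul_smul, smul_add]
      abel
    rw [expand] at h
    simp only [map_add, map_smul, hc, smul_eq_mul, mul_zero, add_zero] at h
    exact h
  have hBre : 0 ≤ B.re ∧ B.im = 0 := by
    have := hpos b
    rw [Complex.le_def] at this
    exact ⟨by simpa using this.1, by simpa using this.2.symm⟩
  -- From reality of the expression for t = 1 and t = I, deduce w = conj z
  have h1 := key 1
  have hI := key Complex.I
  rw [Complex.le_def] at h1 hI
  have e1 : z.im + w.im = 0 := by
    have := h1.2
    simp [Complex.add_im, hBre.2] at this
    linarith
  have e2 : z.re - w.re = 0 := by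
    have := hI.2
    simp [Complex.add_im, Complex.mul_im, hBre.2] at this
    linarith
  have hwz : w = (starRingEnd ℂ) z := by
    apply Complex.ext
    · simp only [Complex.conj_re]; linarith
    · simp only [Complex.conj_im]; linarith
  -- Now plug in t = -s * conj z for real s
  by_contra hz0
  have hnz : 0 < Complex.normSq z := by
    rcases (Complex.normSq_pos (z := z)).2 (by exact fun h => hz0 (h ▸ rfl)) with h
    exact h
  set s : ℝ := (B.re + 1) / (2 * Complex.normSq z) with hs
  have hspos : 0 < s := by
    have hB1 : 0 < B.re + 1 := by linarith [hBre.1]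
    positivity
  have := key (-(s : ℂ) * (starRingEnd ℂ) z)
  rw [Complex.le_def] at this
  have hre := this.1
  have : (B + -(s : ℂ) * (starRingEnd ℂ) z * z
      + (starRingEnd ℂ) (-(s : ℂ) * (starRingEnd ℂ) z) * w).re
      = B.re - 2 * s * Complex.normSq z := by
    rw [hwz]
    have : (starRingEnd ℂ) (-(s : ℂ) * (starRingEnd ℂ) z) = -(s : ℂ) * z := by
      simp [map_mul]
    rw [this]
    have hzz : (starRingEnd ℂ) z * z = (Complex.normSq z : ℂ) := by
      rw [mul_comm]; exact Complex.mul_conj z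
    have hzz' : z * (starRingEnd ℂ) z = (Complex.normSq z : ℂ) := Complex.mul_conj z
    have : -(s : ℂ) * (starRingEnd ℂ) z * z + -(s : ℂ) * z * (starRingEnd ℂ) z
        = -((2 * s * Complex.normSq z : ℝ) : ℂ) := by
      rw [mul_assoc, hzz, mul_assoc, hzz']
      push_cast; ring
    rw [add_assoc, this]
    simp [Complex.sub_re]
    ring
  rw [this] at hre
  have : B.re - 2 * s * Complex.normSq z = -1 := by
    rw [hs]; field_simp; ring
  rw [this] at hre
  norm_num at hre

/-- The entanglement kernel is an order ideal of `A_R`. -/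
theorem entKer_orderIdeal {C : Type*} [NormedRing C] [StarRing C] [CStarRing C]
    [NormedAlgebra ℂ C] [StarModule ℂ C] [CompleteSpace C]
    [PartialOrder C] [StarOrderedRing C]
    (AL AR : StarSubalgebra ℂ C)
    (hL : IsClosed (AL : Set C)) (hR : IsClosed (AR : Set C))
    (ω : C →ₗ[ℂ] ℂ) (hω : IsState ω)
    (hcomm : ∀ x ∈ AL, ∀ y ∈ AR, x * y = y * x) :
    ∀ k ∈ entKer AL AR ω, 0 ≤ k →
      ∀ a ∈ AR, 0 ≤ a → a ≤ k → a ∈ entKer AL AR ω := by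
  letI : CStarAlgebra C := {}
  intro k hk hk0 a haR ha0 hak
  have hpos := hω.2
  -- ω is nonnegative on nonnegative elements
  have ωnonneg : ∀ p : C, 0 ≤ p → 0 ≤ ω p := by
    intro p hp
    have hs : CFC.sqrt p * CFC.sqrt p = p := CFC.sqrt_mul_sqrt_self p hp
    have hsa : star (CFC.sqrt p) = CFC.sqrt p :=
      (IsSelfAdjoint.of_nonneg (CFC.sqrt_nonneg p)).star_eq
    have := hpos (CFC.sqrt p)
    rwa [hsa, hs] at this
  -- ω k = 0
  have ωk : ω k = 0 := by simpa using hk.2 1 AL.one_mem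
  -- ω a = 0
  have ωa : ω a = 0 := by
    have h1 : 0 ≤ ω a := ωnonneg a ha0
    have h2 : 0 ≤ ω (k - a) := ωnonneg _ (by rwa [sub_nonneg])
    rw [map_sub, ωk, zero_sub] at h2
    have := neg_nonneg.mp h2
    exact le_antisymm this h1
  -- a * a ≤ ‖a‖ • a
  have hasa : IsSelfAdjoint a := IsSelfAdjoint.of_nonneg ha0
  have haa : ω (a * a) = 0 := by
    set s := CFC.sqrt a with hsdef
    have hs : s * s = a := CFC.sqrt_mul_sqrt_self a ha0
    have hssa : star s = s := (IsSelfAdjoint.of_nonneg (CFC.sqrt_nonneg a)).star_eq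
    have hle : a ≤ algebraMap ℝ C ‖a‖ := IsSelfAdjoint.le_algebraMap_norm_self hasa
    have hconj := star_left_conjugate_le_conjugate hle s
    rw [hssa] at hconj
    have hL1 : s * a * s = a * a := by
      rw [← hs]; noncomm_ring
    have hR1 : s * algebraMap ℝ C ‖a‖ * s = ‖a‖ • a := by
      rw [Algebra.algebraMap_eq_smul_one, mul_smul_comm, mul_one, smul_mul_assoc, hs]
    rw [hL1, hR1] at hconj
    have h1 : 0 ≤ ω (a * a) := by
      have := hpos a
      rwa [hasa.star_eq] at this
    have h2 : 0 ≤ ω (‖a‖ • a - a * a) := ωnonneg _ (by rwa [sub_nonneg])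
    have hsm : ω (‖a‖ • a) = 0 := by
      have : (‖a‖ : ℝ) • a = ((‖a‖ : ℂ)) • a := by
        rw [Complex.coe_smul]
      rw [this, map_smul, ωa, smul_zero]
    rw [map_sub, hsm, zero_sub] at h2
    exact le_antisymm (neg_nonneg.mp h2) h1
  -- conclude via degenerate Cauchy–Schwarz
  refine ⟨haR, fun x hx => ?_⟩
  have hc : ω (star a * a) = 0 := by rwa [hasa.star_eq]
  have := cs_degenerate ω hpos (star x) a hc
  rwa [star_star] at this
end

section
/- The entanglement kernel can be computed using only positive elements on which ω does not vanish: K_ω = {a ∈ A_R : ω(x * a) = 0 for every x ∈ A_L with 0 ≤ x and ω(x) ≠ 0}. -/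
open ComplexOrder

/-- The entanglement kernel can be computed using only positive elements of `A_L`
on which `ω` does not vanish. -/
theorem entKer_eq_of_pos_ne_zero {C : Type*} [NormedRing C] [StarRing C] [CStarRing C]
    [NormedAlgebra ℂ C] [StarModule ℂ C] [CompleteSpace C]
    [PartialOrder C] [StarOrderedRing C]
    (AL AR : StarSubalgebra ℂ C)
    (hL : IsClosed (AL : Set C)) (hR : IsClosed (AR : Set C))
    (ω : C →ₗ[ℂ] ℂ) (hω : IsState ω) :
    entKer AL AR ω =
      {a : C | a ∈ AR ∧ ∀ x ∈ AL, 0 ≤ x → ω x ≠ 0 → ω (x * a) = 0} := by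
  letI : CStarAlgebra C := {}
  ext a
  simp only [entKer, Set.mem_setOf_eq]
  refine ⟨fun ⟨haR, h⟩ => ⟨haR, fun x hx _ _ => h x hx⟩, fun ⟨haR, h⟩ => ⟨haR, fun x hx => ?_⟩⟩
  -- Step 0: ω (1 * a) = 0
  have h1 : ω ((1 : C) * a) = 0 :=
    h 1 AL.one_mem zero_le_one (by rw [hω.1]; exact one_ne_zero)
  -- Step 1: positive elements of AL
  have hpos : ∀ p ∈ AL, (0 : C) ≤ p → ω (p * a) = 0 := by
    intro p hp hppos
    by_cases hωp : ω p = 0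
    · have h2 : ω ((p + 1) * a) = 0 :=
        h (p + 1) (AL.add_mem hp AL.one_mem) (add_nonneg hppos zero_le_one)
          (by rw [map_add, hω.1, hωp, zero_add]; exact one_ne_zero)
      rw [add_mul, map_add, h1, add_zero] at h2
      exact h2
    · exact h p hp hppos hωp
  -- Step 2: selfadjoint elements of AL
  have hsa : ∀ y ∈ AL, IsSelfAdjoint y → ω (y * a) = 0 := by
    intro y hy hysa
    have hmem : algebraMap ℝ C ‖y‖ ∈ AL := by
      rw [IsScalarTower.algebraMap_apply ℝ ℂ C]
      exact AL.algebraMap_mem _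
    have hp1 : (0 : C) ≤ algebraMap ℝ C ‖y‖ + y := by
      have h0 := hysa.neg_algebraMap_norm_le_self
      have h0' : -y ≤ algebraMap ℝ C ‖y‖ := neg_le.mp h0
      have := sub_nonneg.mpr h0'
      rwa [sub_neg_eq_add] at this
    have hp2 : (0 : C) ≤ algebraMap ℝ C ‖y‖ - y :=
      sub_nonneg.mpr hysa.le_algebraMap_norm_self
    have e1 : ω ((algebraMap ℝ C ‖y‖ + y) * a) = 0 :=
      hpos _ (AL.add_mem hmem hy) hp1
    have e2 : ω ((algebraMap ℝ C ‖y‖ - y) * a) = 0 :=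
      hpos _ (AL.sub_mem hmem hy) hp2
    have key : ω ((algebraMap ℝ C ‖y‖ + y) * a) - ω ((algebraMap ℝ C ‖y‖ - y) * a)
        = 2 * ω (y * a) := by
      rw [← map_sub]
      have : (algebraMap ℝ C ‖y‖ + y) * a - (algebraMap ℝ C ‖y‖ - y) * a
          = y * a + y * a := by noncomm_ring
      rw [this, map_add, two_mul]
    rw [e1, e2, sub_zero] at key
    have : ω (y * a) = 0 := by
      field_simp at key
      exact (mul_eq_zero.mp key.symm).resolve_left two_ne_zero
    exact this
  -- Step 3: general elements via real and imaginary parts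
  have hre : (↑(realPart x) : C) ∈ AL := by
    rw [realPart_apply_coe, ← algebraMap_smul ℂ ((2:ℝ)⁻¹)]
    exact AL.smul_mem (AL.add_mem hx (star_mem (s := AL) hx)) _
  have him : (↑(imaginaryPart x) : C) ∈ AL := by
    rw [imaginaryPart_apply_coe, ← algebraMap_smul ℂ ((2:ℝ)⁻¹) (x - star x)]
    exact AL.smul_mem (AL.smul_mem (AL.sub_mem hx (star_mem (s := AL) hx)) _) _
  have hdecomp := realPart_add_I_smul_imaginaryPart x
  calc ω (x * a) = ω (((↑(realPart x) : C) + Complex.I • (↑(imaginaryPart x) : C)) * a) := by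
        rw [hdecomp]
    _ = ω ((↑(realPart x) : C) * a) + Complex.I * ω ((↑(imaginaryPart x) : C) * a) := by
        rw [add_mul, map_add, smul_mul_assoc, map_smul, smul_eq_mul]
    _ = 0 := by
        rw [hsa _ hre (realPart x).2, hsa _ him (imaginaryPart x).2, mul_zero, add_zero]
end

section
/- The induced functional ω̄ is positive on the image of the positive cone: for every a ∈ A_R such that a + k is positive in C for some k ∈ K_ω, the value ω(a) is a nonnegative real number. -/
open ComplexOrder

/-- The induced functional is positive on the image of the positive cone: if `a ∈ A_R`
and `a + k` is positive for some `k ∈ K_ω`, then `ω a` is a nonnegative real number. -/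
theorem omega_bar_pos {C : Type*} [NormedRing C] [StarRing C] [CStarRing C]
    [NormedAlgebra ℂ C] [StarModule ℂ C] [CompleteSpace C]
    [PartialOrder C] [StarOrderedRing C]
    (AL AR : StarSubalgebra ℂ C)
    (hL : IsClosed (AL : Set C)) (hR : IsClosed (AR : Set C))
    (ω : C →ₗ[ℂ] ℂ) (hω : IsState ω) :
    ∀ a ∈ AR, ∀ k ∈ entKer AL AR ω, 0 ≤ a + k → 0 ≤ ω a := by
  rintro a ha k ⟨hkR, hk⟩ hpos
  have hk1 : ω k = 0 := by simpa using hk 1 AL.one_mem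
  have hωa : ω a = ω (a + k) := by rw [map_add, hk1, add_zero]
  rw [hωa]
  have hmem := StarOrderedRing.nonneg_iff.mp hpos
  refine AddSubmonoid.closure_induction ?_ (by simp) ?_ hmem
  · rintro x ⟨s, rfl⟩
    exact hω.2 s
  · intro x y _ _ hx hy
    rw [map_add]
    exact add_nonneg hx hy
end

section
/- The functional Γ is dominated by the quotient norm: for every a ∈ A_R and every k ∈ K_ω one has Γ(a) ≤ ‖a + k‖; equivalently, Γ(a) ≤ dist(a, K_ω) = inf{‖a + k‖ : k ∈ K_ω}. -/
open ComplexOrder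

/-- `Γ(a) = sup { |ω (x * a)| : x ∈ A_L, 0 ≤ x, ω x = 1 }`. -/
noncomputable def Gamma {C : Type*} [NormedRing C] [StarRing C] [NormedAlgebra ℂ C]
    [StarModule ℂ C] [PartialOrder C] [StarOrderedRing C]
    (AL : StarSubalgebra ℂ C) (ω : C →ₗ[ℂ] ℂ) (a : C) : ℝ :=
  sSup {r : ℝ | ∃ x ∈ AL, 0 ≤ x ∧ ω x = 1 ∧ r = ‖ω (x * a)‖}

/-! ### Auxiliary lemmas -/

lemma auxPos {A : Type*} [NonUnitalRing A] [Module ℂ A] [StarRing A] [PartialOrder A]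
    [StarOrderedRing A] (ω : A →ₗ[ℂ] ℂ) (hω : ∀ a, 0 ≤ ω (star a * a)) {y : A} (hy : 0 ≤ y) :
    0 ≤ ω y := by
  rw [StarOrderedRing.nonneg_iff] at hy
  induction hy using AddSubmonoid.closure_induction with
  | mem z hz => obtain ⟨s, rfl⟩ := hz; exact hω s
  | zero => simp
  | add a b _ _ ha hb => rw [map_add]; exact add_nonneg ha hb

lemma auxMono {A : Type*} [NonUnitalRing A] [Module ℂ A] [StarRing A] [PartialOrder A]
    [StarOrderedRing A] (ω : A →ₗ[ℂ] ℂ) (hω : ∀ a, 0 ≤ ω (star a * a)) {y z : A} (hyz : y ≤ z) :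
    ω y ≤ ω z := by
  have := auxPos ω hω (sub_nonneg.mpr hyz)
  rw [map_sub] at this
  exact sub_nonneg.mp this

lemma auxImEqZero {z : ℂ} (hz : 0 ≤ z) : z.im = 0 := by
  rw [Complex.le_def] at hz; simpa using hz.2.symm

lemma auxStar {A : Type*} [Ring A] [Algebra ℂ A] [StarRing A] [StarModule ℂ A]
    (ω : A →ₗ[ℂ] ℂ) (hω : ∀ a, 0 ≤ ω (star a * a)) (y : A) :
    ω (star y) = starRingEnd ℂ (ω y) := by
  have h1 : star (1 + y) * (1 + y) = 1 + y + star y + star y * y := by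
    simp [add_mul, mul_add]; abel
  have hst : star (1 + Complex.I • y) = 1 - Complex.I • star y := by
    simp [star_smul, Complex.conj_I, neg_smul, sub_eq_add_neg]
  have h2 : star (1 + Complex.I • y) * (1 + Complex.I • y)
      = 1 + Complex.I • y - Complex.I • star y + star y * y := by
    have hmul : (Complex.I • star y) * (Complex.I • y) = -(star y * y) := by
      rw [smul_mul_smul_comm, Complex.I_mul_I, neg_one_smul]
    rw [hst]
    simp only [sub_mul, mul_add, one_mul, mul_one, hmul]
    abel
  have e0 : (ω 1).im = 0 := by
    have := auxImEqZero (by simpa using hω 1); simpa using this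
  have er : (ω (star y * y)).im = 0 := auxImEqZero (hω y)
  have e1 := auxImEqZero (hω (1 + y))
  have e2 := auxImEqZero (hω (1 + Complex.I • y))
  rw [h1] at e1; rw [h2] at e2
  simp only [map_add, map_sub, map_smul, Complex.add_im, Complex.sub_im, Complex.smul_im,
    smul_eq_mul, Complex.mul_im, Complex.I_re, Complex.I_im, e0, er] at e1 e2
  apply Complex.ext <;> simp [Complex.conj_re, Complex.conj_im] <;> linarith

lemma auxCentralizerClosed {A : Type*} [NormedRing A] (S : Set A) :
    IsClosed (Set.centralizer S) := by
  have : Set.centralizer S = ⋂ m ∈ S, {c : A | m * c = c * m} := by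
    ext c; simp [Set.mem_centralizer_iff]
  rw [this]
  exact isClosed_biInter fun m _ => isClosed_eq (continuous_mul_left m) (continuous_mul_right m)

lemma auxSqrt {A : Type*} [CStarAlgebra A] [PartialOrder A] [StarOrderedRing A]
    {x b : A} (hx : 0 ≤ x) (hxb : x * b = b * x) (hxsb : x * star b = star b * x) :
    ∃ s : A, s * s = x ∧ star s = s ∧ s * b = b * s ∧ s * star b = star b * s := by
  have hxsa : IsSelfAdjoint x := .of_nonneg hx
  have hnormal : IsStarNormal x := hxsa.isStarNormal
  set f : ℂ → ℂ := fun z => (Real.sqrt z.re : ℂ) with hf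
  have hcont : Continuous f := Complex.continuous_ofReal.comp
    (Real.continuous_sqrt.comp Complex.continuous_re)
  set s : A := cfc f x with hs
  have hres := hxsa.spectrumRestricts
  have hspec : ∀ z ∈ spectrum ℂ x, z = (z.re : ℂ) ∧ 0 ≤ z.re := by
    intro z hz
    refine ⟨(hres.rightInvOn hz).symm, ?_⟩
    exact spectrum_nonneg_of_nonneg hx (hres.apply_mem hz)
  have hss : s * s = x := by
    rw [hs, ← cfc_mul f f x hcont.continuousOn hcont.continuousOn]
    have : (spectrum ℂ x).EqOn (fun z => f z * f z) id := by
      intro z hz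
      obtain ⟨h1, h2⟩ := hspec z hz
      simp only [hf, id_eq, ← Complex.ofReal_mul, Real.mul_self_sqrt h2]
      exact h1.symm
    rw [cfc_congr this, cfc_id ℂ x]
  have hstar : star s = s := by
    rw [hs, ← cfc_star f x]
    exact cfc_congr fun z hz => by simp [hf, Complex.conj_ofReal]
  have hmem : s ∈ StarAlgebra.elemental ℂ x := by
    rw [hs, cfc_apply f x hnormal hcont.continuousOn, cfcHom_eq_of_isStarNormal]
    exact SetLike.coe_mem _
  have hZ : StarAlgebra.elemental ℂ x ≤ StarSubalgebra.centralizer ℂ ({b} : Set A) := by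
    apply StarAlgebra.elemental.le_of_mem
    · rw [StarSubalgebra.coe_centralizer]
      exact auxCentralizerClosed _
    · rw [StarSubalgebra.mem_centralizer_iff]
      rintro g rfl
      exact ⟨hxb.symm, hxsb.symm⟩
  obtain ⟨h1, h2⟩ := (StarSubalgebra.mem_centralizer_iff (R := ℂ)).mp (hZ hmem) b rfl
  exact ⟨s, hss, hstar, h1.symm, h2.symm⟩

lemma auxKey {A : Type*} [CStarAlgebra A] [PartialOrder A] [StarOrderedRing A]
    (ω : A →ₗ[ℂ] ℂ) (hω : ∀ a, 0 ≤ ω (star a * a))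
    {x b : A} (hx : 0 ≤ x) (hx1 : ω x = 1) (hxb : x * b = b * x)
    (hxsb : x * star b = star b * x) :
    ‖ω (x * b)‖ ≤ ‖b‖ := by
  obtain ⟨s, hss, hstar, hsb, hssb⟩ := auxSqrt hx hxb hxsb
  set t := ω (x * b) with htdef
  by_cases ht : t = 0
  · rw [ht]; simpa using norm_nonneg b
  set u : ℂ := starRingEnd ℂ t / (‖t‖ : ℝ) with hu
  have habs_ne : (‖t‖ : ℂ) ≠ 0 := by
    simpa using ht
  have hut : u * t = (‖t‖ : ℂ) := by
    rw [hu, div_mul_eq_mul_div, mul_comm, Complex.mul_conj, Complex.normSq_eq_norm_sq, sq,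
      Complex.ofReal_mul, mul_div_assoc, div_self habs_ne, mul_one]
  have hu1 : ‖u‖ = 1 := by
    rw [hu, norm_div, Complex.norm_conj, Complex.norm_real, norm_norm,
      div_self (norm_ne_zero_iff.mpr ht)]
  set c : A := u • b with hc
  set h : A := c + star c with hh
  have hsc : s * c = c * s := by rw [hc, mul_smul_comm, smul_mul_assoc, hsb]
  have hssc : s * star c = star c * s := by
    rw [hc, star_smul, mul_smul_comm, smul_mul_assoc, hssb]
  have hsh : s * h = h * s := by rw [hh, mul_add, add_mul, hsc, hssc]
  have hωc : ω (x * c) = (‖t‖ : ℂ) := by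
    rw [hc, mul_smul_comm, map_smul, smul_eq_mul, ← htdef, hut]
  have hxsc : x * star c = star c * x := by
    rw [hc, star_smul, mul_smul_comm, smul_mul_assoc, hxsb]
  have hstarxc : star (x * c) = x * star c := by
    rw [star_mul, (IsSelfAdjoint.of_nonneg hx).star_eq, hxsc]
  have hωsc : ω (x * star c) = (‖t‖ : ℂ) := by
    rw [← hstarxc, auxStar ω hω, hωc, Complex.conj_ofReal]
  have hωh : ω (x * h) = ((2 * ‖t‖ : ℝ) : ℂ) := by
    rw [hh, mul_add, map_add, hωc, hωsc]
    push_cast; ring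
  have hh_sa : IsSelfAdjoint h := by
    rw [IsSelfAdjoint, hh, star_add, star_star, add_comm]
  have hnormc : ‖c‖ = ‖b‖ := by
    rw [hc, norm_smul]
    simp [hu1]
  have hnormh : ‖h‖ ≤ 2 * ‖b‖ := by
    calc ‖h‖ ≤ ‖c‖ + ‖star c‖ := norm_add_le _ _
    _ = 2 * ‖b‖ := by rw [norm_star, hnormc]; ring
  have hle : x * h ≤ ‖h‖ • x := by
    have h1 : h ≤ algebraMap ℝ A ‖h‖ := hh_sa.le_algebraMap_norm_self
    have h2 := star_left_conjugate_le_conjugate h1 s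
    rw [hstar] at h2
    calc x * h = s * (s * h) := by rw [← hss, mul_assoc]
    _ = s * h * s := by rw [hsh, ← mul_assoc, hsh]
    _ ≤ s * algebraMap ℝ A ‖h‖ * s := h2
    _ = ‖h‖ • x := by
        rw [Algebra.algebraMap_eq_smul_one, mul_smul_comm, mul_one, smul_mul_assoc, hss]
  have hmono := auxMono ω hω hle
  have hωsm : ω (‖h‖ • x) = (‖h‖ : ℂ) := by
    rw [ω.map_smul_of_tower, hx1, Complex.real_smul, mul_one]
  rw [hωh, hωsm] at hmono
  rw [Complex.real_le_real] at hmono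
  linarith

/-- `Γ` is dominated by the quotient norm: `Γ(a) ≤ ‖a + k‖` for every `k ∈ K_ω`;
equivalently, `Γ(a) ≤ dist (a, K_ω) = inf {‖a + k‖ : k ∈ K_ω}`. -/
theorem Gamma_le_quotient_norm {C : Type*} [NormedRing C] [StarRing C] [CStarRing C]
    [NormedAlgebra ℂ C] [StarModule ℂ C] [CompleteSpace C]
    [PartialOrder C] [StarOrderedRing C]
    (AL AR : StarSubalgebra ℂ C)
    (hL : IsClosed (AL : Set C)) (hR : IsClosed (AR : Set C))
    (ω : C →ₗ[ℂ] ℂ) (hω : IsState ω)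
    (hcomm : ∀ x ∈ AL, ∀ y ∈ AR, x * y = y * x) :
    ∀ a ∈ AR,
      (∀ k ∈ entKer AL AR ω, Gamma AL ω a ≤ ‖a + k‖) ∧
      Gamma AL ω a ≤ sInf {r : ℝ | ∃ k ∈ entKer AL AR ω, r = ‖a + k‖} := by
  letI : CStarAlgebra C := { }
  intro a ha
  have h1 : ∀ k ∈ entKer AL AR ω, Gamma AL ω a ≤ ‖a + k‖ := by
    intro k hk
    apply Real.sSup_le _ (norm_nonneg _)
    rintro r ⟨x, hxAL, hx0, hx1, rfl⟩
    have hb : a + k ∈ AR := add_mem ha hk.1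
    have heq : ω (x * a) = ω (x * (a + k)) := by
      rw [mul_add, map_add, hk.2 x hxAL, add_zero]
    rw [heq]
    exact auxKey ω hω.2 hx0 hx1 (hcomm x hxAL _ hb) (hcomm x hxAL _ (star_mem hb))
  refine ⟨h1, ?_⟩
  have hne : {r : ℝ | ∃ k ∈ entKer AL AR ω, r = ‖a + k‖}.Nonempty :=
    ⟨‖a + 0‖, 0, ⟨zero_mem _, fun x _ => by simp⟩, rfl⟩
  apply le_csInf hne
  rintro r ⟨k, hk, rfl⟩
  exact h1 k hk
end

section
/- Let S : C → C be a *-algebra automorphism (a bijective, unital, multiplicative, star-preserving ℂ-linear map) such that ω ∘ S = ω and S⁻¹(A_L) ⊆ A_L. Then for every a ∈ A_L and every k ∈ K_ω such that S(a * k) ∈ A_R, one has S(a * k) ∈ K_ω. (This is the well-definedness, on classes modulo the entanglement kernel, of the generating bilinear map E(a, ⌊a_R⌋) = ⌊S(a · a_R)⌋ of Fannes–Nachtergaele–Werner.) -/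
open ComplexOrder

/-- Well-definedness of the Fannes–Nachtergaele–Werner generating bilinear map
`E(a, ⌊a_R⌋) = ⌊S (a * a_R)⌋` on classes modulo the entanglement kernel: if `S` is a
`*`-algebra automorphism preserving `ω` with `S⁻¹ (A_L) ⊆ A_L`, then for `a ∈ A_L` and
`k ∈ K_ω` with `S (a * k) ∈ A_R`, one has `S (a * k) ∈ K_ω`. -/
theorem generating_map_wellDefined {C : Type*} [NormedRing C] [StarRing C] [CStarRing C]
    [NormedAlgebra ℂ C] [StarModule ℂ C] [CompleteSpace C]
    (AL AR : StarSubalgebra ℂ C)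
    (hL : IsClosed (AL : Set C)) (hR : IsClosed (AR : Set C))
    (ω : C →ₗ[ℂ] ℂ) (hω : IsState ω)
    (S : C ≃⋆ₐ[ℂ] C)
    (hinv : ∀ a : C, ω (S a) = ω a)
    (hSL : ∀ x ∈ AL, S.symm x ∈ AL) :
    ∀ a ∈ AL, ∀ k ∈ entKer AL AR ω, S (a * k) ∈ AR → S (a * k) ∈ entKer AL AR ω := by
  intro a ha k hk hS
  refine ⟨hS, fun x hx => ?_⟩
  have h1 : x * S (a * k) = S (S.symm x * (a * k)) := by
    simp [map_mul]
  rw [h1, hinv, ← mul_assoc]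
  exact hk.2 _ (AL.mul_mem (hSL x hx) ha)
end

section
/- Let S_R : C → C be a unital *-algebra homomorphism with S_R(A_R) ⊆ A_R. Assume: (clustering) for every ε > 0 there exists r₀ such that for all r ≥ r₀, all a_L ∈ A_L and all a_R ∈ A_R, |ω(a_L * S_R^{∘r}(a_R)) − ω(a_L)·ω(a_R)| ≤ ε·‖a_L‖·‖a_R‖; and (lower bound) there exists c > 0 such that for every a ∈ A_R, c · dist(a, K_ω) ≤ sup{ |ω(x * a)| : x ∈ A_L, ‖x‖ ≤ 1 }. Then for every a ∈ A_R, dist(S_R^{∘r}(a) − ω(a)·1, K_ω) → 0 as r → ∞; that is, in the quotient A_R / K_ω the iterates of the induced shift map converge pointwise to ω(a)·⌊1⌋, so the line spanned by the class of the unit is the only attractor of the induced shift. -/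
open ComplexOrder

/-- The quotient norm (distance to the entanglement kernel):
`dist (a, K_ω) = inf { ‖a + k‖ : k ∈ K_ω }`. -/
noncomputable def quotDist {C : Type*} [NormedRing C] [StarRing C] [NormedAlgebra ℂ C]
    [StarModule ℂ C] (AL AR : StarSubalgebra ℂ C) (ω : C →ₗ[ℂ] ℂ) (a : C) : ℝ :=
  sInf {r : ℝ | ∃ k ∈ entKer AL AR ω, r = ‖a + k‖}

/-- Under the asymptotic clustering property and the lower bound on the functional
`Γ`, the iterates of the induced shift map on `A_R / K_ω` converge pointwise to
`ω(a) • ⌊1⌋`: the line spanned by the class of the unit is the only attractor. -/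
theorem shift_iterates_tendsto {C : Type*} [NormedRing C] [StarRing C] [CStarRing C]
    [NormedAlgebra ℂ C] [StarModule ℂ C] [CompleteSpace C]
    (AL AR : StarSubalgebra ℂ C)
    (hL : IsClosed (AL : Set C)) (hR : IsClosed (AR : Set C))
    (ω : C →ₗ[ℂ] ℂ) (hω : IsState ω)
    (S : C →⋆ₐ[ℂ] C) (hSR : ∀ a ∈ AR, S a ∈ AR)
    (hcluster : ∀ ε : ℝ, 0 < ε → ∃ r₀ : ℕ, ∀ r ≥ r₀, ∀ aL ∈ AL, ∀ aR ∈ AR,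
      ‖ω (aL * (⇑S)^[r] aR) - ω aL * ω aR‖ ≤ ε * ‖aL‖ * ‖aR‖)
    (hlow : ∃ c : ℝ, 0 < c ∧ ∀ a ∈ AR, c * quotDist AL AR ω a ≤
      sSup {r : ℝ | ∃ x ∈ AL, ‖x‖ ≤ 1 ∧ r = ‖ω (x * a)‖}) :
    ∀ a ∈ AR,
      Filter.Tendsto (fun r : ℕ => quotDist AL AR ω ((⇑S)^[r] a - ω a • (1 : C)))
        Filter.atTop (nhds 0) := by
  obtain ⟨c, hc, hlow⟩ := hlow
  intro a ha
  have hmem : ∀ r : ℕ, (⇑S)^[r] a - ω a • (1 : C) ∈ AR := by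
    intro r
    refine sub_mem ?_ (SMulMemClass.smul_mem _ (one_mem AR))
    induction r with
    | zero => simpa using ha
    | succ n ih => rw [Function.iterate_succ_apply']; exact hSR _ ih
  have hq0 : ∀ b : C, 0 ≤ quotDist AL AR ω b := by
    intro b
    apply Real.sInf_nonneg
    rintro r ⟨k, hk, rfl⟩
    exact norm_nonneg _
  rw [Metric.tendsto_atTop]
  intro ε hε
  have hden : (0:ℝ) < ‖a‖ + 1 := by positivity
  set ε' : ℝ := c * ε / (2 * (‖a‖ + 1)) with hε'def
  have hε' : 0 < ε' := by positivity
  obtain ⟨r₀, hr₀⟩ := hcluster ε' hε'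
  refine ⟨r₀, fun r hr => ?_⟩
  set b := (⇑S)^[r] a - ω a • (1 : C) with hb
  have key : ∀ x ∈ AL, ‖x‖ ≤ 1 → ‖ω (x * b)‖ ≤ ε' * ‖a‖ := by
    intro x hx hx1
    have : x * b = x * (⇑S)^[r] a - ω a • x := by
      rw [hb, mul_sub, mul_smul_comm, mul_one]
    have hω' : ω (x * b) = ω (x * (⇑S)^[r] a) - ω x * ω a := by
      rw [this, map_sub, map_smul, smul_eq_mul, mul_comm (ω a) (ω x)]
    rw [hω']
    calc ‖ω (x * (⇑S)^[r] a) - ω x * ω a‖ ≤ ε' * ‖x‖ * ‖a‖ :=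
          hr₀ r hr x hx a ha
      _ ≤ ε' * 1 * ‖a‖ := by
          gcongr
      _ = ε' * ‖a‖ := by ring
  have hsup : sSup {s : ℝ | ∃ x ∈ AL, ‖x‖ ≤ 1 ∧ s = ‖ω (x * b)‖} ≤ ε' * ‖a‖ := by
    apply Real.sSup_le
    · rintro s ⟨x, hx, hx1, rfl⟩
      exact key x hx hx1
    · positivity
  have hqd : c * quotDist AL AR ω b ≤ ε' * ‖a‖ := le_trans (hlow b (hmem r)) hsup
  have hqd2 : quotDist AL AR ω b ≤ ε' * ‖a‖ / c := by
    rw [le_div_iff₀ hc]; linarith [hqd]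
  have hlt : ε' * ‖a‖ / c < ε := by
    rw [hε'def, div_lt_iff₀ hc]
    rw [div_mul_eq_mul_div, div_lt_iff₀ (by positivity : (0:ℝ) < 2 * (‖a‖ + 1))]
    nlinarith [norm_nonneg a, mul_pos hc hε]
  rw [Real.dist_eq, sub_zero, abs_of_nonneg (hq0 b)]
  exact lt_of_le_of_lt hqd2 hlt
end

section
/- Every bounded operator on H expands weakly in terms of the Z-operators: for every continuous linear operator A : H → H and all vectors v, w ∈ H̃, the iterated sums satisfy ∑_{i ∈ I} ( ∑_{j ∈ I} ⟪δ_i, A δ_j⟫ · ⟪v, (Z_i ∘ (Z_j)*) w⟫ ) = ⟪v, ι(A) w⟫, where both the inner sum (over j, for each fixed i) and the outer sum (over i) converge; this expresses the weak expansion A = ∑_{i,j} ⟪δ_i, A δ_j⟫ Z_i Z_j*. -/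
/-- For `ψ ∈ H`, the operator `Z_ψ : H̃ → H̃`, `(α, u) ↦ (0, α • ψ)`, on the Hilbert space
direct sum `H̃ = ℂ ⊕ H` (realized as `WithLp 2 (ℂ × H)`). -/
noncomputable def Zop {H : Type*} [NormedAddCommGroup H] [InnerProductSpace ℂ H] (ψ : H) :
    WithLp 2 (ℂ × H) →L[ℂ] WithLp 2 (ℂ × H) :=
  ((WithLp.prodContinuousLinearEquiv (p := 2) (𝕜 := ℂ) (α := ℂ) (β := H)).symm :
      ℂ × H →L[ℂ] WithLp 2 (ℂ × H)) ∘L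
    (ContinuousLinearMap.inr ℂ ℂ H) ∘L (ContinuousLinearMap.toSpanSingleton ℂ ψ) ∘L
    (ContinuousLinearMap.fst ℂ ℂ H) ∘L
    ((WithLp.prodContinuousLinearEquiv (p := 2) (𝕜 := ℂ) (α := ℂ) (β := H)) :
      WithLp 2 (ℂ × H) →L[ℂ] ℂ × H)

/-- The embedding `ι : B(H) → B(H̃)`, sending `A` to the operator `(α, u) ↦ (0, A u)`. -/
noncomputable def iotaOp {H : Type*} [NormedAddCommGroup H] [InnerProductSpace ℂ H]
    (A : H →L[ℂ] H) : WithLp 2 (ℂ × H) →L[ℂ] WithLp 2 (ℂ × H) :=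
  ((WithLp.prodContinuousLinearEquiv (p := 2) (𝕜 := ℂ) (α := ℂ) (β := H)).symm :
      ℂ × H →L[ℂ] WithLp 2 (ℂ × H)) ∘L
    (ContinuousLinearMap.inr ℂ ℂ H) ∘L A ∘L
    (ContinuousLinearMap.snd ℂ ℂ H) ∘L
    ((WithLp.prodContinuousLinearEquiv (p := 2) (𝕜 := ℂ) (α := ℂ) (β := H)) :
      WithLp 2 (ℂ × H) →L[ℂ] ℂ × H)


open scoped InnerProductSpace

section Aux
variable {H : Type*} [NormedAddCommGroup H] [InnerProductSpace ℂ H]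

lemma inner_Zop (φ : H) (v y : WithLp 2 (ℂ × H)) :
    ⟪v, Zop φ y⟫_ℂ = y.fst * ⟪v.snd, φ⟫_ℂ := by
  simp [Zop, WithLp.prod_inner_apply, inner_smul_right,
    ContinuousLinearMap.toSpanSingleton_apply]

lemma fst_eq_inner (y : WithLp 2 (ℂ × H)) :
    y.fst = ⟪((WithLp.equiv 2 (ℂ × H)).symm (1, 0)), y⟫_ℂ := by
  simp [WithLp.prod_inner_apply]

lemma inner_iota (A : H →L[ℂ] H) (v w : WithLp 2 (ℂ × H)) :
    ⟪v, iotaOp A w⟫_ℂ = ⟪v.snd, A w.snd⟫_ℂ := by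
  simp [iotaOp, WithLp.prod_inner_apply]

variable [CompleteSpace H]

lemma fst_adjoint_Zop (ψ : H) (w : WithLp 2 (ℂ × H)) :
    (ContinuousLinearMap.adjoint (Zop ψ) w).fst = ⟪ψ, w.snd⟫_ℂ := by
  rw [fst_eq_inner, ContinuousLinearMap.adjoint_inner_right]
  simp [Zop, WithLp.prod_inner_apply, ContinuousLinearMap.toSpanSingleton_apply]

lemma inner_ZZ (φ ψ : H) (v w : WithLp 2 (ℂ × H)) :
    ⟪v, (Zop φ ∘L ContinuousLinearMap.adjoint (Zop ψ)) w⟫_ℂ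
      = ⟪ψ, w.snd⟫_ℂ * ⟪v.snd, φ⟫_ℂ := by
  rw [ContinuousLinearMap.comp_apply, inner_Zop, fst_adjoint_Zop]

end Aux

/-- The weak expansion `A = ∑_{i,j} ⟪δ_i, A δ_j⟫ Z_i Z_j*`: for all `v, w ∈ H̃`, the
iterated sums `∑_i ∑_j ⟪δ_i, A δ_j⟫ ⟪v, Z_i Z_j* w⟫` converge (the inner one for each
fixed `i`) and add up to `⟪v, ι(A) w⟫`. -/
theorem weak_expansion {H : Type*} [NormedAddCommGroup H] [InnerProductSpace ℂ H]
    [CompleteSpace H] {I : Type*} (b : HilbertBasis I ℂ H)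
    (A : H →L[ℂ] H) (v w : WithLp 2 (ℂ × H)) :
    (∀ i : I, Summable fun j : I =>
        (@inner ℂ _ _ (b i) (A (b j))) *
          @inner ℂ _ _ v ((Zop (b i) ∘L ContinuousLinearMap.adjoint (Zop (b j))) w)) ∧
    HasSum
      (fun i : I => ∑' j : I,
        (@inner ℂ _ _ (b i) (A (b j))) *
          @inner ℂ _ _ v ((Zop (b i) ∘L ContinuousLinearMap.adjoint (Zop (b j))) w))
      (@inner ℂ _ _ v (iotaOp A w)) := by
  have key : ∀ i j : I,
      (⟪b i, A (b j)⟫_ℂ) * ⟪v, (Zop (b i) ∘L ContinuousLinearMap.adjoint (Zop (b j))) w⟫_ℂ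
        = (⟪ContinuousLinearMap.adjoint A (b i), b j⟫_ℂ * ⟪b j, w.snd⟫_ℂ) * ⟪v.snd, b i⟫_ℂ := by
    intro i j
    rw [inner_ZZ, ContinuousLinearMap.adjoint_inner_left]
    ring
  have hinner : ∀ i : I,
      HasSum (fun j : I => (⟪b i, A (b j)⟫_ℂ) *
          ⟪v, (Zop (b i) ∘L ContinuousLinearMap.adjoint (Zop (b j))) w⟫_ℂ)
        (⟪b i, A w.snd⟫_ℂ * ⟪v.snd, b i⟫_ℂ) := by
    intro i
    have h := (b.hasSum_inner_mul_inner (ContinuousLinearMap.adjoint A (b i)) w.snd).mul_right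
      (⟪v.snd, b i⟫_ℂ)
    rw [ContinuousLinearMap.adjoint_inner_left] at h
    simp only [key]
    exact h
  refine ⟨fun i => (hinner i).summable, ?_⟩
  have hout := b.hasSum_inner_mul_inner v.snd (A w.snd)
  rw [inner_iota]
  convert hout using 2 with i
  case e'_3 => rfl
  rw [(hinner i).tsum_eq, mul_comm]
end
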